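/- arXiv:2312.01969 — 3 statements merged into one kernel-verified Lean document; each statement's English description precedes it below -/
import Mathlib

section
/- Let m be a positive integer, let H0 ⊆ {1,…,m} be a set of m0 null indices, and let p_1,…,p_m be independent [0,1]-valued random variables such that p_i is uniformly distributed on [0,1] for every i ∈ H0. Then for every α ∈ (0,1], the Benjamini–Hochberg procedure at level α applied to (p_1,…,p_m) achieves exact FDR control: FDR = m0·α/m. -/
open MeasureTheory ProbabilityTheory Finset Filter
open scoped Classical ENNReal

/-- Hypothesis `i` is rejected by the Benjamini–Hochberg procedure at level `α`
applied to the p-values `p` (i.e. `p i ≤ ε_BH` where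
`ε_BH = max {α k / m : p_(k) ≤ α k / m, 1 ≤ k ≤ m}`, no rejection if this set is empty). -/
def bhRejects (m : ℕ) (α : ℝ) (p : Fin m → ℝ) (i : Fin m) : Prop :=
  ∃ k ∈ Finset.Icc 1 m,
    p i ≤ α * k / m ∧
      k ≤ (Finset.univ.filter fun j => p j ≤ α * (k : ℝ) / m).card

/-- Number of rejections of the BH procedure at level `α`. -/
noncomputable def bhR (m : ℕ) (α : ℝ) (p : Fin m → ℝ) : ℕ :=
  (Finset.univ.filter fun i => bhRejects m α p i).card

/-- Number of false positives (rejected null hypotheses) of BH at level `α`. -/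
noncomputable def bhFP (m : ℕ) (α : ℝ) (H0 : Finset (Fin m)) (p : Fin m → ℝ) : ℕ :=
  (H0.filter fun i => bhRejects m α p i).card

/-- False discovery proportion of BH at level `α` (with the convention 0/0 = 0). -/
noncomputable def bhFDP (m : ℕ) (α : ℝ) (H0 : Finset (Fin m)) (p : Fin m → ℝ) : ℝ :=
  (bhFP m α H0 p : ℝ) / (bhR m α p : ℝ)

section Comb

variable {m : ℕ} {α : ℝ}

/-- counting function -/
noncomputable def bhN (m : ℕ) (α : ℝ) (x : Fin m → ℝ) (k : ℕ) : ℕ :=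
  (Finset.univ.filter fun j => x j ≤ α * (k : ℝ) / m).card

noncomputable def bhS (m : ℕ) (α : ℝ) (x : Fin m → ℝ) : Finset ℕ :=
  (Finset.Icc 1 m).filter fun k => k ≤ bhN m α x k

lemma bhN_mono (hα : 0 ≤ α) (x : Fin m → ℝ) {k k' : ℕ} (h : k ≤ k') :
    bhN m α x k ≤ bhN m α x k' := by
  apply Finset.card_le_card
  intro j hj
  simp only [Finset.mem_filter, Finset.mem_univ, true_and] at hj ⊢
  refine hj.trans ?_
  have : (k:ℝ) ≤ (k':ℝ) := by exact_mod_cast h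
  gcongr

lemma bhRejects_iff_S (x : Fin m → ℝ) (i : Fin m) :
    bhRejects m α x i ↔ ∃ k ∈ bhS m α x, x i ≤ α * k / m := by
  unfold bhRejects bhS
  constructor
  · rintro ⟨k, hk, h1, h2⟩
    exact ⟨k, Finset.mem_filter.2 ⟨hk, h2⟩, h1⟩
  · rintro ⟨k, hk, h1⟩
    rw [Finset.mem_filter] at hk
    exact ⟨k, hk.1, h1, hk.2⟩

lemma bhR_eq_max' (hm : 0 < m) (hα : 0 < α) (x : Fin m → ℝ)
    (hS : (bhS m α x).Nonempty) :
    bhR m α x = (bhS m α x).max' hS := by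
  set K := (bhS m α x).max' hS with hK
  have hKmem : K ∈ bhS m α x := (bhS m α x).max'_mem hS
  have hKIcc : K ∈ Finset.Icc 1 m := (Finset.mem_filter.1 hKmem).1
  have hKN : K ≤ bhN m α x K := (Finset.mem_filter.1 hKmem).2
  have hNK : bhN m α x K = K := by
    refine le_antisymm ?_ hKN
    by_contra hlt
    push_neg at hlt
    have hKm : K < m := by
      rcases lt_or_eq_of_le (Finset.mem_Icc.1 hKIcc).2 with h | h
      · exact h
      · exfalso
        have : bhN m α x K ≤ m := by
          refine (Finset.card_filter_le _ _).trans ?_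
          simp
        omega
    have hmem : K + 1 ∈ bhS m α x := by
      refine Finset.mem_filter.2 ⟨Finset.mem_Icc.2 ⟨by omega, by omega⟩, ?_⟩
      have := bhN_mono (le_of_lt hα) x (Nat.le_succ K)
      rw [Nat.succ_eq_add_one] at this
      omega
    have := (bhS m α x).le_max' _ hmem
    omega
  have hrej : ∀ i, bhRejects m α x i ↔ x i ≤ α * K / m := by
    intro i
    rw [bhRejects_iff_S]
    constructor
    · rintro ⟨k, hk, h1⟩
      refine h1.trans ?_
      have hkK : k ≤ K := (bhS m α x).le_max' _ hk
      have : (k : ℝ) ≤ (K : ℝ) := by exact_mod_cast hkK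
      gcongr
    · intro h
      exact ⟨K, hKmem, h⟩
  unfold bhR
  have : (Finset.univ.filter fun i => bhRejects m α x i)
      = Finset.univ.filter fun j => x j ≤ α * (K : ℝ) / m := by
    apply Finset.filter_congr
    intro i _
    simpa using hrej i
  rw [this]
  exact hNK

lemma key_iff (hm : 0 < m) (hα : 0 < α) (x : Fin m → ℝ) (i : Fin m) (hx : 0 ≤ x i) :
    (bhRejects m α x i ↔ x i ≤ α * (bhR m α (Function.update x i 0)) / m)
    ∧ (bhRejects m α x i → bhR m α x = bhR m α (Function.update x i 0)) := by
  set x0 := Function.update x i 0 with hx0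
  have hx0i : x0 i = 0 := Function.update_self i 0 x
  have hx0le : ∀ j, x0 j ≤ x j := by
    intro j
    by_cases h : j = i
    · subst h; rw [hx0i]; exact hx
    · rw [hx0, Function.update_of_ne h]
  have hmR : (0:ℝ) < m := by exact_mod_cast hm
  -- S x0 nonempty
  have hS0 : (bhS m α x0).Nonempty := by
    refine ⟨1, Finset.mem_filter.2 ⟨Finset.mem_Icc.2 ⟨le_refl 1, hm⟩, ?_⟩⟩
    have : i ∈ Finset.univ.filter fun j => x0 j ≤ α * (1 : ℕ) / m := by
      simp only [Finset.mem_filter, Finset.mem_univ, true_and, hx0i]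
      positivity
    have := Finset.card_pos.2 ⟨i, this⟩
    exact this
  set K' := (bhS m α x0).max' hS0 with hK'
  have hR0 : bhR m α x0 = K' := bhR_eq_max' hm hα x0 hS0
  have hK'mem : K' ∈ bhS m α x0 := (bhS m α x0).max'_mem hS0
  have hK'Icc : K' ∈ Finset.Icc 1 m := (Finset.mem_filter.1 hK'mem).1
  have hK'N : K' ≤ bhN m α x0 K' := (Finset.mem_filter.1 hK'mem).2
  have hc0 : (0:ℝ) ≤ α * K' / m := by positivity
  -- monotonicity S x ⊆ S x0
  have hNle : ∀ k, bhN m α x k ≤ bhN m α x0 k := by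
    intro k
    apply Finset.card_le_card
    intro j hj
    simp only [Finset.mem_filter, Finset.mem_univ, true_and] at hj ⊢
    exact (hx0le j).trans hj
  have hSsub : bhS m α x ⊆ bhS m α x0 := by
    intro k hk
    rw [bhS, Finset.mem_filter] at hk ⊢
    exact ⟨hk.1, hk.2.trans (hNle k)⟩
  -- if x i ≤ α K'/m then bhN x K' = bhN x0 K'
  have hNeq : x i ≤ α * K' / m → bhN m α x K' = bhN m α x0 K' := by
    intro h
    unfold bhN
    congr 1
    apply Finset.filter_congr
    intro j _
    by_cases hji : j = i
    · subst hji
      simp only [h, hx0i, hc0, iff_true]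
    · rw [hx0, Function.update_of_ne hji]
  have hback : x i ≤ α * K' / m → bhRejects m α x i := by
    intro h
    refine ⟨K', hK'Icc, h, ?_⟩
    have := hNeq h
    unfold bhN at this
    rw [this]
    exact hK'N
  have hfwd : bhRejects m α x i → x i ≤ α * K' / m ∧ bhR m α x = K' := by
    intro h
    obtain ⟨k, hkS, hki⟩ := (bhRejects_iff_S x i).1 h
    have hSne : (bhS m α x).Nonempty := ⟨k, hkS⟩
    set K := (bhS m α x).max' hSne with hKdef
    have hR : bhR m α x = K := bhR_eq_max' hm hα x hSne
    have hKmem : K ∈ bhS m α x := (bhS m α x).max'_mem hSne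
    have hKK' : K ≤ K' := (bhS m α x0).le_max' _ (hSsub hKmem)
    have hxi : x i ≤ α * K / m := by
      refine hki.trans ?_
      have hk : k ≤ K := (bhS m α x).le_max' _ hkS
      have : (k:ℝ) ≤ (K:ℝ) := by exact_mod_cast hk
      gcongr
    have hxi' : x i ≤ α * K' / m := by
      refine hxi.trans ?_
      have : (K:ℝ) ≤ (K':ℝ) := by exact_mod_cast hKK'
      gcongr
    refine ⟨hxi', ?_⟩
    have hK'S : K' ∈ bhS m α x := by
      refine Finset.mem_filter.2 ⟨hK'Icc, ?_⟩
      rw [hNeq hxi']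
      exact hK'N
    have : K' ≤ K := (bhS m α x).le_max' _ hK'S
    rw [hR]
    omega
  rw [hR0]
  exact ⟨⟨fun h => (hfwd h).1, hback⟩, fun h => (hfwd h).2⟩

end Comb

section Helpers

variable {m : ℕ} {α : ℝ}

lemma bhR_le (x : Fin m → ℝ) : bhR m α x ≤ m := by
  refine (Finset.card_filter_le _ _).trans ?_
  simp

lemma bhR_pos (hm : 0 < m) (hα : 0 < α) (x : Fin m → ℝ) (i : Fin m) (hxi : x i = 0) :
    1 ≤ bhR m α x := by
  have hrej : bhRejects m α x i := by
    refine ⟨1, Finset.mem_Icc.2 ⟨le_refl 1, hm⟩, ?_, ?_⟩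
    · rw [hxi]; positivity
    · refine Finset.card_pos.2 ⟨i, ?_⟩
      simp only [Finset.mem_filter, Finset.mem_univ, true_and, hxi]
      positivity
  refine Finset.card_pos.2 ⟨i, ?_⟩
  simp only [Finset.mem_filter, Finset.mem_univ, true_and]
  exact hrej

lemma term_eq (hm : 0 < m) (hα : 0 < α) (x : Fin m → ℝ) (i : Fin m) (hx : 0 ≤ x i) :
    (if bhRejects m α x i then (1:ℝ) else 0) / (bhR m α x : ℝ)
      = if x i ≤ α * (bhR m α (Function.update x i 0)) / m
        then ((bhR m α (Function.update x i 0) : ℝ))⁻¹ else 0 := by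
  obtain ⟨hiff, heq⟩ := key_iff hm hα x i hx
  by_cases h : bhRejects m α x i
  · rw [if_pos h, if_pos (hiff.1 h), heq h, one_div]
  · rw [if_neg h, if_neg (fun hc => h (hiff.2 hc)), zero_div]

lemma measurable_bhN (k : ℕ) : Measurable fun x : Fin m → ℝ => bhN m α x k := by
  unfold bhN
  simp only [Finset.card_filter]
  apply Finset.measurable_sum
  intro j _
  exact Measurable.ite (measurableSet_le (measurable_pi_apply j) measurable_const)
    measurable_const measurable_const

lemma measurableSet_bhRejects (i : Fin m) :
    MeasurableSet {x : Fin m → ℝ | bhRejects m α x i} := by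
  have : {x : Fin m → ℝ | bhRejects m α x i}
      = ⋃ k ∈ Finset.Icc 1 m,
          ({x : Fin m → ℝ | x i ≤ α * k / m} ∩ {x : Fin m → ℝ | k ≤ bhN m α x k}) := by
    ext x
    simp only [bhRejects, bhN, Set.mem_setOf_eq, Set.mem_iUnion, Finset.mem_coe,
      Finset.mem_Icc, Set.mem_inter_iff, exists_prop]
  rw [this]
  refine MeasurableSet.biUnion (Finset.Icc 1 m).countable_toSet fun k _ => ?_
  exact (measurableSet_le (measurable_pi_apply i) measurable_const).inter
    ((measurable_bhN k) measurableSet_Ici)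

lemma measurable_bhR : Measurable fun x : Fin m → ℝ => bhR m α x := by
  unfold bhR
  simp only [Finset.card_filter]
  apply Finset.measurable_sum
  intro j _
  exact Measurable.ite (measurableSet_bhRejects j) measurable_const measurable_const

end Helpers

section Integral

lemma volume_restrict_prob : IsProbabilityMeasure (volume.restrict (Set.Icc (0:ℝ) 1)) := by
  constructor
  rw [Measure.restrict_apply_univ, Real.volume_Icc]
  norm_num

lemma term_integral {Ω : Type*} [MeasurableSpace Ω] (μ : Measure Ω) [IsProbabilityMeasure μ]
    (m : ℕ) (hm : 0 < m) (p : Fin m → Ω → ℝ) (hmeas : ∀ i, Measurable (p i))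
    (hrange : ∀ i ω, p i ω ∈ Set.Icc (0 : ℝ) 1)
    (hindep : iIndepFun p μ) (i : Fin m)
    (huni : μ.map (p i) = volume.restrict (Set.Icc (0 : ℝ) 1))
    (α : ℝ) (hα0 : 0 < α) (hα1 : α ≤ 1) :
    ∫ ω, (if bhRejects m α (fun j => p j ω) i then (1:ℝ) else 0)
        / (bhR m α (fun j => p j ω) : ℝ) ∂μ = α / m := by
  have hmR : (0:ℝ) < m := by exact_mod_cast hm
  set S : Finset (Fin m) := {i}ᶜ with hSdef
  set rest : Ω → (S → ℝ) := fun ω j => p j ω with hrest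
  set recon : ℝ → (S → ℝ) → (Fin m → ℝ) := fun t y j =>
    if h : j = i then t else y ⟨j, by simp [hSdef, h]⟩ with hrecon
  have hreconx : ∀ ω, recon (p i ω) (rest ω) = fun j => p j ω := by
    intro ω
    funext j
    by_cases h : j = i
    · subst h; simp [hrecon]
    · simp [hrecon, h, hrest]
  have hupdate : ∀ t y, Function.update (recon t y) i 0 = recon 0 y := by
    intro t y
    funext j
    by_cases h : j = i
    · subst h; simp [hrecon]
    · rw [Function.update_of_ne h]
      simp [hrecon, h]
  set r : (S → ℝ) → ℕ := fun y => bhR m α (recon 0 y) with hrdef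
  have hr1 : ∀ y, 1 ≤ r y := by
    intro y
    refine bhR_pos hm hα0 _ i ?_
    simp [hrecon]
  have hrm : ∀ y, r y ≤ m := fun y => bhR_le _
  set f : ℝ × (S → ℝ) → ℝ := fun z =>
    if z.1 ≤ α * (r z.2) / m then ((r z.2 : ℝ))⁻¹ else 0 with hfdef
  have hterm : ∀ ω, (if bhRejects m α (fun j => p j ω) i then (1:ℝ) else 0)
      / (bhR m α (fun j => p j ω) : ℝ) = f (p i ω, rest ω) := by
    intro ω
    have h0 : (0:ℝ) ≤ p i ω := (hrange i ω).1
    have := term_eq hm hα0 (fun j => p j ω) i h0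
    rw [this]
    have hupd : Function.update (fun j => p j ω) i 0 = recon 0 (rest ω) := by
      rw [← hreconx ω, hupdate]
    rw [hupd]
  -- measurability
  have hrest_meas : Measurable rest := measurable_pi_lambda _ fun j => hmeas j
  have hrecon0_meas : Measurable (recon 0) := by
    apply measurable_pi_lambda
    intro j
    by_cases h : j = i
    · simp only [hrecon, dif_pos h]
      exact measurable_const
    · simp only [hrecon, dif_neg h]
      exact measurable_pi_apply _
  have hr_meas : Measurable r := measurable_bhR.comp hrecon0_meas
  have hrcast : Measurable fun z : ℝ × (S → ℝ) => ((r z.2 : ℝ)) :=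
    measurable_from_top.comp (hr_meas.comp measurable_snd)
  have hf_meas : Measurable f := by
    apply Measurable.ite
    · exact measurableSet_le measurable_fst ((hrcast.const_mul α).div_const m)
    · exact hrcast.inv
    · exact measurable_const
  -- independence
  have hIndep : IndepFun (p i) rest μ := by
    have h1 := hindep.indepFun_finset {i} ({i}ᶜ) disjoint_compl_right hmeas
    have hev : Measurable fun v : (({i} : Finset (Fin m)) → ℝ) =>
        v ⟨i, Finset.mem_singleton_self i⟩ := measurable_pi_apply _
    exact h1.comp hev measurable_id
  have hmap : μ.map (fun ω => (p i ω, rest ω)) = (μ.map (p i)).prod (μ.map rest) :=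
    (indepFun_iff_map_prod_eq_prod_map_map (hmeas i).aemeasurable
      hrest_meas.aemeasurable).1 hIndep
  have hprob1 : IsProbabilityMeasure (volume.restrict (Set.Icc (0:ℝ) 1)) :=
    volume_restrict_prob
  have hprob2 : IsProbabilityMeasure (μ.map rest) :=
    Measure.isProbabilityMeasure_map hrest_meas.aemeasurable
  have hfint : Integrable f ((volume.restrict (Set.Icc (0:ℝ) 1)).prod (μ.map rest)) := by
    refine Integrable.mono' (integrable_const 1) hf_meas.aestronglyMeasurable
      (Filter.Eventually.of_forall fun z => ?_)
    simp only [hfdef]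
    split_ifs with h
    · rw [Real.norm_eq_abs, abs_of_nonneg (by positivity)]
      refine inv_le_one_of_one_le₀ ?_
      exact_mod_cast hr1 z.2
    · simp
  -- inner integral computation
  have hinner : ∀ y : S → ℝ,
      ∫ t, f (t, y) ∂(volume.restrict (Set.Icc (0:ℝ) 1)) = α / m := by
    intro y
    have hr1' : (1:ℝ) ≤ (r y : ℝ) := by exact_mod_cast hr1 y
    have hr0 : (0:ℝ) < (r y : ℝ) := lt_of_lt_of_le one_pos hr1'
    set c : ℝ := α * (r y) / m with hcdef
    have hc0 : 0 < c := by positivity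
    have hc1 : c ≤ 1 := by
      rw [hcdef, div_le_one hmR]
      calc α * (r y : ℝ) ≤ 1 * (m : ℝ) := by
            apply mul_le_mul hα1 ?_ (le_of_lt hr0) zero_le_one
            exact_mod_cast hrm y
        _ = m := one_mul _
    have hfy : (fun t => f (t, y))
        = Set.indicator (Set.Iic c) (fun _ => ((r y : ℝ))⁻¹) := by
      funext t
      simp only [hfdef, Set.indicator_apply, Set.mem_Iic]
      rfl
    rw [hfy, integral_indicator_const _ measurableSet_Iic]
    rw [measureReal_def, Measure.restrict_apply measurableSet_Iic]
    have hset : Set.Iic c ∩ Set.Icc (0:ℝ) 1 = Set.Icc 0 c := by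
      ext t
      simp only [Set.mem_inter_iff, Set.mem_Iic, Set.mem_Icc]
      constructor
      · rintro ⟨h1, h2, h3⟩; exact ⟨h2, h1⟩
      · rintro ⟨h1, h2⟩; exact ⟨h2, h1, h2.trans hc1⟩
    rw [hset, Real.volume_Icc, ENNReal.toReal_ofReal (by linarith)]
    rw [smul_eq_mul, sub_zero, hcdef]
    field_simp
  -- main computation
  calc ∫ ω, (if bhRejects m α (fun j => p j ω) i then (1:ℝ) else 0)
        / (bhR m α (fun j => p j ω) : ℝ) ∂μ
      = ∫ ω, f (p i ω, rest ω) ∂μ := by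
        exact integral_congr_ae (Filter.Eventually.of_forall hterm)
    _ = ∫ z, f z ∂(μ.map (fun ω => (p i ω, rest ω))) := by
        rw [integral_map ((hmeas i).prodMk hrest_meas).aemeasurable
          hf_meas.aestronglyMeasurable]
    _ = ∫ z, f z ∂((volume.restrict (Set.Icc (0:ℝ) 1)).prod (μ.map rest)) := by
        rw [hmap, huni]
    _ = ∫ y, ∫ t, f (t, y) ∂(volume.restrict (Set.Icc (0:ℝ) 1)) ∂(μ.map rest) :=
        integral_prod_symm f hfint
    _ = ∫ _, α / m ∂(μ.map rest) := by
        exact integral_congr_ae (Filter.Eventually.of_forall hinner)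
    _ = α / m := by
        simp [measure_univ]

end Integral

/-- with independent p-values whose null coordinates are uniform on
`[0,1]`, the BH procedure at level `α` achieves exact FDR control `FDR = m0 * α / m`. -/
theorem bh_exact_fdr_control
    {Ω : Type*} [MeasurableSpace Ω] (μ : Measure Ω) [IsProbabilityMeasure μ]
    (m m0 : ℕ) (hm : 0 < m) (H0 : Finset (Fin m)) (hcard : H0.card = m0)
    (p : Fin m → Ω → ℝ) (hmeas : ∀ i, Measurable (p i))
    (hrange : ∀ i ω, p i ω ∈ Set.Icc (0 : ℝ) 1)
    (hindep : iIndepFun p μ)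
    (hunif : ∀ i ∈ H0, μ.map (p i) = volume.restrict (Set.Icc (0 : ℝ) 1))
    (α : ℝ) (hα : α ∈ Set.Ioc (0 : ℝ) 1) :
    ∫ ω, bhFDP m α H0 (fun i => p i ω) ∂μ = m0 * α / m := by
  obtain ⟨hα0, hα1⟩ := hα
  have hdecomp : ∀ ω, bhFDP m α H0 (fun i => p i ω)
      = ∑ i ∈ H0, (if bhRejects m α (fun j => p j ω) i then (1:ℝ) else 0)
          / (bhR m α (fun j => p j ω) : ℝ) := by
    intro ω
    unfold bhFDP bhFP
    rw [Finset.card_filter]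
    push_cast
    rw [Finset.sum_div]
  have hPmeas : Measurable fun ω => (fun j => p j ω) :=
    measurable_pi_lambda _ fun j => hmeas j
  have hint : ∀ i ∈ H0, Integrable (fun ω =>
      (if bhRejects m α (fun j => p j ω) i then (1:ℝ) else 0)
        / (bhR m α (fun j => p j ω) : ℝ)) μ := by
    intro i _
    refine Integrable.mono' (integrable_const 1) ?_
      (Filter.Eventually.of_forall fun ω => ?_)
    · exact (((Measurable.ite (measurableSet_bhRejects i) measurable_const
        measurable_const).div (measurable_from_top.comp measurable_bhR)).comp
        hPmeas).aestronglyMeasurable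
    · rcases Nat.eq_zero_or_pos (bhR m α (fun j => p j ω)) with h | h
      · simp [h]
      · rw [Real.norm_eq_abs, abs_div]
        refine div_le_one_of_le₀ ?_ (abs_nonneg _)
        have h1 : (1:ℝ) ≤ (bhR m α (fun j => p j ω) : ℝ) := by exact_mod_cast h
        rw [abs_of_nonneg (by positivity : (0:ℝ) ≤ (bhR m α (fun j => p j ω) : ℝ))]
        split_ifs
        · rwa [abs_one]
        · rw [abs_zero]; linarith
  calc ∫ ω, bhFDP m α H0 (fun i => p i ω) ∂μ
      = ∫ ω, ∑ i ∈ H0, (if bhRejects m α (fun j => p j ω) i then (1:ℝ) else 0)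
          / (bhR m α (fun j => p j ω) : ℝ) ∂μ :=
        integral_congr_ae (Filter.Eventually.of_forall hdecomp)
    _ = ∑ i ∈ H0, ∫ ω, (if bhRejects m α (fun j => p j ω) i then (1:ℝ) else 0)
          / (bhR m α (fun j => p j ω) : ℝ) ∂μ := integral_finset_sum H0 hint
    _ = ∑ _i ∈ H0, α / m := by
        refine Finset.sum_congr rfl fun i hi => ?_
        exact term_integral μ m hm p hmeas hrange hindep i (hunif i hi) α hα0 hα1
    _ = m0 * α / m := by
        rw [Finset.sum_const, hcard, nsmul_eq_mul]
        ring
end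

section
/- Let m, n, m0 be integers with m0 ≤ m, let X_1,…,X_m be independent random variables of which the m0 variables indexed by the null set H0 have distribution P0, and for each i let p̂_i be the empirical p-value of X_i computed from its own calibration set {Z_{i,1},…,Z_{i,n}} of n i.i.d. P0 points, all calibration sets being mutually independent and independent of (X_1,…,X_m), with a scoring function whose reference score distribution is atomless (so no ties occur a.s.). For a null index i, let R(i) denote the number of rejections made by BH at level α when p̂_i is replaced by 0. Then for every α ∈ (0,1], the FDR of the BH procedure at level α applied to (p̂_1,…,p̂_m) equals m0 · Σ_{k=1}^m [ (⌊αkn/m⌋ + 1)/((n+1)·k) ] · P(R(i) = k). -/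
open MeasureTheory ProbabilityTheory Finset
open scoped Classical ENNReal

/-- Empirical p-value of a point `x` with respect to the calibration set `z`. -/
noncomputable def empPval {𝒳 : Type*} (n : ℕ) (a : 𝒳 → ℝ) (x : 𝒳) (z : Fin n → 𝒳) : ℝ :=
  (1 / (n : ℝ)) * ∑ u : Fin n, if a x ≤ a (z u) then (1 : ℝ) else 0

namespace BHaux

variable {m : ℕ} {α : ℝ}

noncomputable def N (m : ℕ) (α : ℝ) (p : Fin m → ℝ) (k : ℕ) : ℕ :=
  (Finset.univ.filter fun j => p j ≤ α * k / m).card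

noncomputable def Kset (m : ℕ) (α : ℝ) (p : Fin m → ℝ) : Finset ℕ :=
  (Finset.Icc 1 m).filter fun k => k ≤ N m α p k

noncomputable def K (m : ℕ) (α : ℝ) (p : Fin m → ℝ) : ℕ := (Kset m α p).sup id

lemma thr_mono (hα : 0 < α) {k k' : ℕ} (h : k ≤ k') : α * k / m ≤ α * k' / m := by
  gcongr

lemma N_mono (hα : 0 < α) (p : Fin m → ℝ) {k k' : ℕ} (h : k ≤ k') :
    N m α p k ≤ N m α p k' := by
  apply Finset.card_le_card
  intro j hj
  simp only [Finset.mem_filter] at hj ⊢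
  exact ⟨hj.1, hj.2.trans (thr_mono hα h)⟩

lemma N_le (p : Fin m → ℝ) (k : ℕ) : N m α p k ≤ m := by
  simpa [N] using Finset.card_filter_le Finset.univ (fun j : Fin m => p j ≤ α * k / m)

lemma K_mem (p : Fin m → ℝ) (h : (Kset m α p).Nonempty) : K m α p ∈ Kset m α p := by
  obtain ⟨b, hb, hb'⟩ := Finset.exists_mem_eq_sup (Kset m α p) h id
  rw [K, hb']; exact hb

lemma le_K_of_mem {p : Fin m → ℝ} {k : ℕ} (h : k ∈ Kset m α p) : k ≤ K m α p :=
  Finset.le_sup (f := id) h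

lemma K_spec {p : Fin m → ℝ} (h : (Kset m α p).Nonempty) :
    1 ≤ K m α p ∧ K m α p ≤ m ∧ K m α p ≤ N m α p (K m α p) := by
  have := K_mem p h
  simp only [Kset, Finset.mem_filter, Finset.mem_Icc] at this
  exact ⟨this.1.1, this.1.2, this.2⟩

lemma bhRejects_iff (hα : 0 < α) (p : Fin m → ℝ) (i : Fin m) :
    bhRejects m α p i ↔ (Kset m α p).Nonempty ∧ p i ≤ α * K m α p / m := by
  constructor
  · rintro ⟨k, hk, hpk, hcard⟩
    have hkmem : k ∈ Kset m α p := by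
      simp only [Kset, Finset.mem_filter]; exact ⟨hk, hcard⟩
    exact ⟨⟨k, hkmem⟩, hpk.trans (thr_mono hα (le_K_of_mem hkmem))⟩
  · rintro ⟨hne, hp⟩
    have h := K_spec hne
    exact ⟨K m α p, Finset.mem_Icc.2 ⟨h.1, h.2.1⟩, hp, h.2.2⟩

lemma bhR_eq_K (hm : 0 < m) (hα : 0 < α) (p : Fin m → ℝ) : bhR m α p = K m α p := by
  by_cases hne : (Kset m α p).Nonempty
  · have h := K_spec (α := α) (p := p) hne
    have hR : bhR m α p = N m α p (K m α p) := by
      unfold bhR N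
      congr 1
      apply Finset.filter_congr
      intro j _
      rw [bhRejects_iff hα]
      exact ⟨fun h' => h'.2, fun h' => ⟨hne, h'⟩⟩
    rw [hR]
    refine le_antisymm ?_ h.2.2
    by_contra hlt'
    have hlt : K m α p < N m α p (K m α p) := lt_of_not_ge fun hc => hlt' (le_trans (le_of_eq rfl) hc)
    have hKm : K m α p < m := lt_of_lt_of_le hlt (N_le p _)
    have : K m α p + 1 ∈ Kset m α p := by
      simp only [Kset, Finset.mem_filter, Finset.mem_Icc]
      exact ⟨⟨Nat.le_add_left 1 _, hKm⟩, le_trans hlt (N_mono hα p (Nat.le_succ _))⟩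
    exact absurd (le_K_of_mem this) (by omega)
  · have h1 : bhR m α p = 0 := by
      unfold bhR
      rw [Finset.card_eq_zero, Finset.filter_eq_empty_iff]
      intro i _ hrej
      rw [bhRejects_iff hα] at hrej
      exact hne hrej.1
    have h2 : K m α p = 0 := by
      unfold K
      rw [Finset.not_nonempty_iff_eq_empty.1 hne]
      rfl
    rw [h1, h2]


variable {p : Fin m → ℝ} {i : Fin m}

lemma N_update_ge (hpi : 0 ≤ p i) (k : ℕ) :
    N m α p k ≤ N m α (Function.update p i 0) k := by
  apply Finset.card_le_card
  intro j hj
  simp only [Finset.mem_filter] at hj ⊢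
  refine ⟨hj.1, ?_⟩
  rcases eq_or_ne j i with rfl | hne
  · rw [Function.update_self]
    exact le_trans hpi hj.2
  · rw [Function.update_of_ne hne]
    exact hj.2

lemma K_update_ge (hα : 0 < α) (hpi : 0 ≤ p i) :
    K m α p ≤ K m α (Function.update p i 0) := by
  rcases (Kset m α p).eq_empty_or_nonempty with he | hne
  · simp [K, he]
  · apply le_K_of_mem
    have := K_mem p hne
    simp only [Kset, Finset.mem_filter] at this ⊢
    exact ⟨this.1, this.2.trans (N_update_ge hpi _)⟩

lemma Kset_update_nonempty (hm : 0 < m) (hα : 0 < α) :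
    (Kset m α (Function.update p i 0)).Nonempty := by
  refine ⟨1, ?_⟩
  simp only [Kset, Finset.mem_filter, Finset.mem_Icc]
  refine ⟨⟨le_refl 1, hm⟩, ?_⟩
  refine le_trans ?_ (le_refl _)
  refine Finset.card_pos.2 ⟨i, ?_⟩
  simp only [N, Finset.mem_filter, Finset.mem_univ, Function.update_self, true_and]
  positivity

lemma N_update_eq_of_le (hα : 0 < α) {k : ℕ}
    (hpk : p i ≤ α * k / m) :
    N m α (Function.update p i 0) k = N m α p k := by
  unfold N
  congr 1
  apply Finset.filter_congr
  intro j _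
  rcases eq_or_ne j i with rfl | hne
  · simp only [Function.update_self]
    constructor
    · intro _; exact hpk
    · intro _; positivity
  · rw [Function.update_of_ne hne]

/-- main key lemma, part 1 -/
lemma rejects_iff_le_thr (hm : 0 < m) (hα : 0 < α) (hpi : 0 ≤ p i) :
    bhRejects m α p i ↔ p i ≤ α * K m α (Function.update p i 0) / m := by
  set p' := Function.update p i 0 with hp'
  constructor
  · intro hrej
    rw [bhRejects_iff hα] at hrej
    exact hrej.2.trans (thr_mono hα (K_update_ge hα hpi))
  · intro hle
    have hne' := Kset_update_nonempty (p := p) (i := i) hm hα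
    have hs := K_spec hne'
    have hNK : N m α p' (K m α p') = N m α p (K m α p') := N_update_eq_of_le hα hle
    have h2 : K m α p' ≤ N m α p (K m α p') := hNK ▸ hs.2.2
    exact ⟨K m α p', Finset.mem_Icc.2 ⟨hs.1, hs.2.1⟩, hle, h2⟩

/-- main key lemma, part 2 -/
lemma K_eq_of_rejects (hm : 0 < m) (hα : 0 < α) (hpi : 0 ≤ p i)
    (hrej : bhRejects m α p i) :
    K m α p = K m α (Function.update p i 0) := by
  set p' := Function.update p i 0 with hp'
  refine le_antisymm (K_update_ge hα hpi) ?_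
  have hle : p i ≤ α * K m α p' / m := (rejects_iff_le_thr hm hα hpi).1 hrej
  have hne' := Kset_update_nonempty (p := p) (i := i) hm hα
  have hs := K_spec hne'
  have hNK : N m α p' (K m α p') = N m α p (K m α p') := N_update_eq_of_le hα hle
  have h2 : K m α p' ≤ N m α p (K m α p') := hNK ▸ hs.2.2
  have hmem : K m α p' ∈ Kset m α p := by
    simp only [Kset, Finset.mem_filter, Finset.mem_Icc]
    exact ⟨⟨hs.1, hs.2.1⟩, h2⟩
  exact le_K_of_mem hmem

/-- permutation invariance -/
lemma card_filter_comp {β : Type*} [Fintype β] (e : β ≃ β) (P : β → Prop) :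
    (Finset.univ.filter fun j => P (e j)).card = (Finset.univ.filter P).card := by
  apply Finset.card_bij' (fun j _ => e j) (fun j _ => e.symm j)
  · intro a ha; simp only [Finset.mem_filter, Finset.mem_univ, true_and] at ha ⊢; exact ha
  · intro a ha; simp only [Finset.mem_filter, Finset.mem_univ, true_and] at ha ⊢
    simpa using ha
  · intro a _; simp
  · intro a _; simp

lemma bhRejects_comp (e : Fin m ≃ Fin m) (p : Fin m → ℝ) (i : Fin m) :
    bhRejects m α (p ∘ e) i ↔ bhRejects m α p (e i) := by
  unfold bhRejects
  simp only [Function.comp_apply]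
  apply exists_congr; intro k
  apply and_congr_right'; apply and_congr_right'
  rw [card_filter_comp e (fun j => p j ≤ α * k / m)]

lemma bhR_comp (e : Fin m ≃ Fin m) (p : Fin m → ℝ) :
    bhR m α (p ∘ e) = bhR m α p := by
  unfold bhR
  calc (Finset.univ.filter fun j => bhRejects m α (p ∘ e) j).card
      = (Finset.univ.filter fun j => bhRejects m α p (e j)).card := by
        congr 1; apply Finset.filter_congr; intro j _; rw [bhRejects_comp]
    _ = _ := card_filter_comp e _


lemma bhR_update_mem_Icc (hm : 0 < m) (hα : 0 < α) (p : Fin m → ℝ) (i : Fin m) :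
    bhR m α (Function.update p i 0) ∈ Finset.Icc 1 m := by
  rw [bhR_eq_K hm hα]
  have hs := K_spec (Kset_update_nonempty (p := p) (i := i) hm hα)
  exact Finset.mem_Icc.2 ⟨hs.1, hs.2.1⟩

lemma rejects_iff_bhR (hm : 0 < m) (hα : 0 < α) (hpi : 0 ≤ p i) :
    bhRejects m α p i ↔ p i ≤ α * (bhR m α (Function.update p i 0)) / m := by
  rw [bhR_eq_K hm hα]
  exact rejects_iff_le_thr hm hα hpi

lemma bhR_eq_of_rejects (hm : 0 < m) (hα : 0 < α) (hpi : 0 ≤ p i)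
    (hrej : bhRejects m α p i) :
    bhR m α p = bhR m α (Function.update p i 0) := by
  rw [bhR_eq_K hm hα, bhR_eq_K hm hα]
  exact K_eq_of_rejects hm hα hpi hrej

lemma rejects_of_rejects_somewhere (hrej : bhRejects m α p i) (j : Fin m)
    (hj : p j ≤ p i) : bhRejects m α p j := by
  obtain ⟨k, hk, hpk, hc⟩ := hrej
  exact ⟨k, hk, hj.trans hpk, hc⟩

lemma bhR_pos_of_rejects (hrej : bhRejects m α p i) : 0 < bhR m α p := by
  rw [bhR, Finset.card_pos]
  exact ⟨i, Finset.mem_filter.2 ⟨Finset.mem_univ i, hrej⟩⟩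

/-- pointwise FDP decomposition -/
lemma fdp_pointwise (hm : 0 < m) (hα : 0 < α) (hp : ∀ j, 0 ≤ p j)
    (H0 : Finset (Fin m)) :
    bhFDP m α H0 p = ∑ i' ∈ H0, ∑ k ∈ Finset.Icc 1 m,
      (if p i' ≤ α * k / m ∧ bhR m α (Function.update p i' 0) = k
        then (k : ℝ)⁻¹ else 0) := by
  have step1 : bhFDP m α H0 p
      = ∑ i' ∈ H0, (if bhRejects m α p i' then ((bhR m α p : ℝ))⁻¹ else 0) := by
    rw [bhFDP, bhFP, Finset.card_filter]
    push_cast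
    rw [Finset.sum_div]
    apply Finset.sum_congr rfl
    intro i' _
    by_cases h : bhRejects m α p i'
    · rw [if_pos h, if_pos h, one_div]
    · rw [if_neg h, if_neg h, zero_div]
  rw [step1]
  apply Finset.sum_congr rfl
  intro i' _
  have hR' := bhR_update_mem_Icc hm hα p i'
  rw [Finset.sum_eq_single (bhR m α (Function.update p i' 0))]
  · by_cases h : bhRejects m α p i'
    · rw [if_pos h, if_pos ⟨(rejects_iff_bhR hm hα (hp i')).1 h, rfl⟩,
        bhR_eq_of_rejects hm hα (hp i') h]
    · rw [if_neg h, if_neg]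
      rintro ⟨h1, -⟩
      exact h ((rejects_iff_bhR hm hα (hp i')).2 h1)
  · intro k _ hkne
    rw [if_neg]
    rintro ⟨-, h2⟩
    exact hkne h2.symm
  · intro hmem
    exact absurd hR' hmem

/-! ### Measurability -/

lemma measurableSet_rejects (m : ℕ) (α : ℝ) (i : Fin m) :
    MeasurableSet {p : Fin m → ℝ | bhRejects m α p i} := by
  have hset : {p : Fin m → ℝ | bhRejects m α p i}
      = ⋃ k ∈ Finset.Icc 1 m, ({p : Fin m → ℝ | p i ≤ α * k / m}
          ∩ {p : Fin m → ℝ | k ≤ (Finset.univ.filter fun j => p j ≤ α * (k : ℝ) / m).card}) := by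
    ext p
    simp only [Set.mem_setOf_eq, Set.mem_iUnion, Set.mem_inter_iff, bhRejects, exists_prop]
  rw [hset]
  apply MeasurableSet.biUnion (Finset.Icc 1 m).countable_toSet
  intro k _
  have h1 : MeasurableSet {p : Fin m → ℝ | p i ≤ α * k / m} :=
    measurableSet_le (measurable_pi_apply i) measurable_const
  have hcount : Measurable fun p : Fin m → ℝ =>
      (Finset.univ.filter fun j => p j ≤ α * (k : ℝ) / m).card := by
    have : (fun p : Fin m → ℝ => (Finset.univ.filter fun j => p j ≤ α * (k : ℝ) / m).card)
        = fun p => ∑ j : Fin m, if p j ≤ α * (k : ℝ) / m then 1 else 0 := by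
      funext p; rw [Finset.card_filter]
    rw [this]
    apply Finset.measurable_sum
    intro j _
    apply Measurable.ite (measurableSet_le (measurable_pi_apply j) measurable_const) <;>
      exact measurable_const
  exact h1.inter (measurableSet_le measurable_const hcount)

lemma measurable_bhR (m : ℕ) (α : ℝ) : Measurable (bhR m α) := by
  have : bhR m α = fun p => ∑ i : Fin m, if bhRejects m α p i then 1 else 0 := by
    funext p; rw [bhR, Finset.card_filter]
  rw [this]
  apply Finset.measurable_sum
  intro i _
  exact Measurable.ite (measurableSet_rejects m α i) measurable_const measurable_const

lemma measurable_update_comp {m : ℕ} (i : Fin m) :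
    Measurable fun p : Fin m → ℝ => Function.update p i 0 := by
  apply measurable_pi_lambda
  intro j
  rcases eq_or_ne j i with rfl | hne
  · simp only [Function.update_self]; exact measurable_const
  · simp only [Function.update_of_ne hne]; exact measurable_pi_apply j


-- ## rank section
section rank
set_option linter.unusedSectionVars false


variable {𝒳 : Type*} [MeasurableSpace 𝒳] (P0 : Measure 𝒳) [IsProbabilityMeasure P0]
  (a : 𝒳 → ℝ) (n : ℕ)

/-- strict count of coordinates with score above that of coordinate `j` -/
noncomputable def cnt (a : 𝒳 → ℝ) (n : ℕ) (w : Fin (n+1) → 𝒳) (j : Fin (n+1)) : ℕ :=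
  (Finset.univ.filter fun u => a (w j) < a (w u)).card

/-- the no-ties set -/
def NT (a : 𝒳 → ℝ) (n : ℕ) : Set (Fin (n+1) → 𝒳) :=
  {w | ∀ u v : Fin (n+1), u ≠ v → a (w u) ≠ a (w v)}

lemma measurable_cnt (ha : Measurable a) (j : Fin (n+1)) : Measurable fun w => cnt a n w j := by
  have : (fun w => cnt a n w j)
      = fun w => ∑ u : Fin (n+1), if a (w j) < a (w u) then 1 else 0 := by
    funext w; rw [cnt, Finset.card_filter]
  rw [this]
  apply Finset.measurable_sum
  intro u _
  exact Measurable.ite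
    (measurableSet_lt (ha.comp (measurable_pi_apply j)) (ha.comp (measurable_pi_apply u)))
    measurable_const measurable_const

lemma measurableSet_NT (ha : Measurable a) : MeasurableSet (NT a n) := by
  have : NT a n = ⋂ (u : Fin (n+1)) (v : Fin (n+1)) (_ : u ≠ v),
      {w : Fin (n+1) → 𝒳 | a (w u) ≠ a (w v)} := by
    ext w; simp [NT]
  rw [this]
  apply MeasurableSet.iInter; intro u
  apply MeasurableSet.iInter; intro v
  apply MeasurableSet.iInter; intro _
  exact (measurableSet_eq_fun (ha.comp (measurable_pi_apply u))
    (ha.comp (measurable_pi_apply v))).compl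

/-- ties have probability zero -/
lemma NT_compl_null (ha : Measurable a) (hatomless : ∀ r : ℝ, P0 {x | a x = r} = 0) :
    Measure.pi (fun _ : Fin (n+1) => P0) (NT a n)ᶜ = 0 := by
  set π := Measure.pi (fun _ : Fin (n+1) => P0)
  have hpair : ∀ u v : Fin (n+1), u ≠ v → π {w | a (w u) = a (w v)} = 0 := by
    intro u v huv
    set g : (Fin (n+1) → 𝒳) → 𝒳 × 𝒳 := fun w => (w u, w v) with hg
    have hgm : Measurable g := (measurable_pi_apply u).prodMk (measurable_pi_apply v)
    have hmap : π.map g = P0.prod P0 := by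
      refine (Measure.prod_eq fun s t hs ht => ?_).symm
      rw [Measure.map_apply hgm (hs.prod ht)]
      have hpre : g ⁻¹' (s ×ˢ t)
          = Set.pi Set.univ (fun j => if j = u then s else if j = v then t else Set.univ) := by
        ext w
        simp only [Set.mem_preimage, Set.mem_prod, Set.mem_pi, Set.mem_univ, true_implies, hg]
        constructor
        · rintro ⟨h1, h2⟩ j
          split_ifs with h h'
          · subst h; exact h1
          · subst h'; exact h2
          · trivial
        · intro h
          constructor
          · have := h u; rwa [if_pos rfl] at this
          · have := h v; rw [if_neg (Ne.symm huv), if_pos rfl] at this; exact this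
      rw [hpre, Measure.pi_pi]
      rw [← Finset.mul_prod_erase Finset.univ _ (Finset.mem_univ u)]
      rw [← Finset.mul_prod_erase (Finset.univ.erase u) _
        (Finset.mem_erase.2 ⟨Ne.symm huv, Finset.mem_univ v⟩)]
      rw [if_pos rfl, if_neg huv.symm, if_pos rfl]
      have hone : ∏ j ∈ (Finset.univ.erase u).erase v,
          P0 (if j = u then s else if j = v then t else Set.univ) = 1 := by
        apply Finset.prod_eq_one
        intro j hj
        simp only [Finset.mem_erase] at hj
        rw [if_neg hj.2.1, if_neg hj.1, measure_univ]
      rw [hone, mul_one]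
    have hmeas2 : MeasurableSet {q : 𝒳 × 𝒳 | a q.1 = a q.2} :=
      measurableSet_eq_fun (ha.comp measurable_fst) (ha.comp measurable_snd)
    have : π {w | a (w u) = a (w v)} = (P0.prod P0) {q : 𝒳 × 𝒳 | a q.1 = a q.2} := by
      rw [← hmap, Measure.map_apply hgm hmeas2]
      rfl
    rw [this, Measure.prod_apply hmeas2]
    have : ∀ x, P0 (Prod.mk x ⁻¹' {q : 𝒳 × 𝒳 | a q.1 = a q.2}) = 0 := by
      intro x
      have : Prod.mk x ⁻¹' {q : 𝒳 × 𝒳 | a q.1 = a q.2} = {y | a y = a x} := by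
        ext y; simp only [Set.mem_preimage, Set.mem_setOf_eq]; exact eq_comm
      rw [this, hatomless]
    simp only [this, lintegral_zero]
  have hsub : (NT a n)ᶜ ⊆ ⋃ (u : Fin (n+1)) (v : Fin (n+1)) (_ : u ≠ v),
      {w | a (w u) = a (w v)} := by
    intro w hw
    simp only [NT, Set.mem_compl_iff, Set.mem_setOf_eq, not_forall] at hw
    obtain ⟨u, v, huv, h⟩ := hw
    simp only [Set.mem_iUnion]
    exact ⟨u, v, huv, not_not.1 h⟩
  refine measure_mono_null hsub ?_
  refine measure_iUnion_null fun u => measure_iUnion_null fun v => measure_iUnion_null fun huv => ?_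
  exact hpair u v huv

/-- on the no-ties set, the count map is injective -/
lemma cnt_injective {w : Fin (n+1) → 𝒳} (hw : w ∈ NT a n) :
    Function.Injective (cnt a n w) := by
  have main : ∀ j j' : Fin (n+1), cnt a n w j = cnt a n w j' →
      a (w j) < a (w j') → False := by
    intro j j' hjj' hlt
    have hstrict : (Finset.univ.filter fun u => a (w j') < a (w u))
        ⊂ Finset.univ.filter fun u => a (w j) < a (w u) := by
      constructor
      · intro u hu
        simp only [Finset.mem_filter] at hu ⊢
        exact ⟨hu.1, hlt.trans hu.2⟩
      · intro hsub
        have h1 : j' ∈ Finset.univ.filter fun u => a (w j) < a (w u) := by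
          simp only [Finset.mem_filter]; exact ⟨Finset.mem_univ _, hlt⟩
        have h2 := hsub h1
        simp only [Finset.mem_filter] at h2
        exact lt_irrefl _ h2.2
    have := Finset.card_lt_card hstrict
    rw [cnt, cnt] at hjj'
    omega
  intro j j' hjj'
  by_contra hne
  rcases (hw j j' hne).lt_or_gt with h | h
  · exact main j j' hjj' h
  · exact main j' j hjj'.symm h

lemma cnt_le (w : Fin (n+1) → 𝒳) (j : Fin (n+1)) : cnt a n w j ≤ n := by
  have hsub : (Finset.univ.filter fun u => a (w j) < a (w u)) ⊆ Finset.univ.erase j := by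
    intro u hu
    simp only [Finset.mem_filter] at hu
    refine Finset.mem_erase.2 ⟨?_, Finset.mem_univ u⟩
    rintro rfl
    exact lt_irrefl _ hu.2
  have := Finset.card_le_card hsub
  rwa [Finset.card_erase_of_mem (Finset.mem_univ j), Finset.card_univ, Fintype.card_fin] at this

lemma cnt_surjective {w : Fin (n+1) → 𝒳} (hw : w ∈ NT a n) {r : ℕ} (hr : r ≤ n) :
    ∃ j, cnt a n w j = r := by
  set f : Fin (n+1) → Fin (n+1) := fun j => ⟨cnt a n w j, Nat.lt_succ_of_le (cnt_le a n w j)⟩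
  have hinj : Function.Injective f := by
    intro x y hxy
    exact cnt_injective a n hw (by simpa [f, Fin.ext_iff] using hxy)
  have hsurj : Function.Surjective f := (Finite.injective_iff_surjective).1 hinj
  obtain ⟨j, hj⟩ := hsurj ⟨r, Nat.lt_succ_of_le hr⟩
  exact ⟨j, by simpa [f, Fin.ext_iff] using hj⟩


lemma card_filter_comp' {β : Type*} [Fintype β] (e : β ≃ β) (P : β → Prop) :
    (Finset.univ.filter fun j => P (e j)).card = (Finset.univ.filter P).card := by
  apply Finset.card_bij' (fun j _ => e j) (fun j _ => e.symm j)
  · intro x hx; simp only [Finset.mem_filter, Finset.mem_univ, true_and] at hx ⊢; exact hx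
  · intro x hx; simp only [Finset.mem_filter, Finset.mem_univ, true_and] at hx ⊢; simpa using hx
  · intro x _; simp
  · intro x _; simp

/-- measure-preservation of coordinate permutations for an iid product -/
lemma pi_perm_invariant (e : Fin (n+1) ≃ Fin (n+1)) {B : Set (Fin (n+1) → 𝒳)}
    (hB : MeasurableSet B) :
    Measure.pi (fun _ : Fin (n+1) => P0) ((fun w => w ∘ e) ⁻¹' B)
      = Measure.pi (fun _ : Fin (n+1) => P0) B := by
  have hmp := measurePreserving_piCongrLeft (fun _ : Fin (n+1) => P0) e.symm
  have hco : ⇑(MeasurableEquiv.piCongrLeft (fun _ : Fin (n+1) => 𝒳) e.symm)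
      = fun w => w ∘ e := by
    funext w
    funext v
    have := MeasurableEquiv.piCongrLeft_apply_apply (β := fun _ : Fin (n+1) => 𝒳)
      e.symm w (e v)
    simpa using this
  have := hmp.measure_preimage (μa := Measure.pi fun _ : Fin (n+1) => P0) hB.nullMeasurableSet
  rwa [hco] at this

lemma cnt_comp (e : Fin (n+1) ≃ Fin (n+1)) (w : Fin (n+1) → 𝒳) (j : Fin (n+1)) :
    cnt a n (w ∘ e) j = cnt a n w (e j) := by
  unfold cnt
  simp only [Function.comp_apply]
  exact card_filter_comp' e (fun u => a (w (e j)) < a (w u))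

lemma cnt_eq_prob_const (ha : Measurable a) (r : ℕ) (j : Fin (n+1)) :
    Measure.pi (fun _ : Fin (n+1) => P0) {w | cnt a n w j = r}
      = Measure.pi (fun _ : Fin (n+1) => P0) {w | cnt a n w 0 = r} := by
  set e := Equiv.swap (0 : Fin (n+1)) j
  have hB : MeasurableSet {w : Fin (n+1) → 𝒳 | cnt a n w 0 = r} :=
    (measurable_cnt a n ha 0) (measurableSet_singleton r)
  have hpre : (fun w : Fin (n+1) → 𝒳 => w ∘ e) ⁻¹' {w | cnt a n w 0 = r}
      = {w | cnt a n w j = r} := by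
    ext w
    simp only [Set.mem_preimage, Set.mem_setOf_eq]
    rw [cnt_comp]
    have : e 0 = j := Equiv.swap_apply_left 0 j
    rw [this]
  rw [← hpre, pi_perm_invariant P0 n e hB]

lemma cnt_uniform (ha : Measurable a) (hatomless : ∀ r : ℝ, P0 {x | a x = r} = 0)
    {r : ℕ} (hr : r ≤ n) :
    Measure.pi (fun _ : Fin (n+1) => P0) {w | cnt a n w 0 = r}
      = (((n : ℝ≥0∞) + 1))⁻¹ := by
  set π := Measure.pi (fun _ : Fin (n+1) => P0) with hπ
  have hprob : IsProbabilityMeasure π := by rw [hπ]; infer_instance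
  set A : Fin (n+1) → Set (Fin (n+1) → 𝒳) := fun j => {w | cnt a n w j = r} with hA
  have hAmeas : ∀ j, MeasurableSet (A j) :=
    fun j => (measurable_cnt a n ha j) (measurableSet_singleton r)
  -- the union of the A j covers NT
  have hcover : NT a n ⊆ ⋃ j, A j := by
    intro w hw
    obtain ⟨j, hj⟩ := cnt_surjective a n hw hr
    exact Set.mem_iUnion.2 ⟨j, hj⟩
  -- pairwise a.e. disjoint
  have hdisj : ∀ j j', j ≠ j' → A j ∩ A j' ⊆ (NT a n)ᶜ := by
    intro j j' hne w hw
    intro hNT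
    exact hne (cnt_injective a n hNT (hw.1.trans hw.2.symm))
  have hNTnull := NT_compl_null P0 a n ha hatomless
  -- sum of measures equals 1
  have hunion : π (⋃ j, A j) = 1 := by
    refine le_antisymm (le_trans (measure_mono (Set.subset_univ _)) (le_of_eq measure_univ)) ?_
    have h1 : π (NT a n) = 1 := by
      have h2 := measure_add_measure_compl (μ := π) (measurableSet_NT a n ha)
      rwa [hNTnull, add_zero, measure_univ] at h2
    calc (1 : ℝ≥0∞) = π (NT a n) := h1.symm
      _ ≤ π (⋃ j, A j) := measure_mono hcover
  have hsum : ∑ j : Fin (n+1), π (A j) = 1 := by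
    rw [← hunion, measure_iUnion₀, tsum_fintype]
    · intro j j' hne
      exact measure_mono_null (hdisj j j' hne) hNTnull
    · exact fun j => (hAmeas j).nullMeasurableSet
  have hconst : ∀ j, π (A j) = π (A 0) := fun j => cnt_eq_prob_const P0 a n ha r j
  have hsum2 : ((n : ℝ≥0∞) + 1) * π (A 0) = 1 := by
    calc ((n : ℝ≥0∞) + 1) * π (A 0) = ((n + 1 : ℕ) : ℝ≥0∞) * π (A 0) := by push_cast; ring
      _ = ∑ _j : Fin (n+1), π (A 0) := by
          rw [Finset.sum_const, Finset.card_univ, Fintype.card_fin, nsmul_eq_mul]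
      _ = ∑ j : Fin (n+1), π (A j) := by
          exact (Finset.sum_congr rfl fun j _ => (hconst j).symm)
      _ = 1 := hsum
  have hne0 : ((n : ℝ≥0∞) + 1) ≠ 0 := by simp
  have hnetop : ((n : ℝ≥0∞) + 1) ≠ ∞ := by
    refine ENNReal.add_ne_top.2 ⟨ENNReal.natCast_ne_top n, ENNReal.one_ne_top⟩
  have := (ENNReal.eq_div_iff hne0 hnetop).2 hsum2
  rw [this, one_div]


lemma count_eq_cnt {w : Fin (n+1) → 𝒳} (hw : w ∈ NT a n) :
    (Finset.univ.filter fun u : Fin n => a (w 0) ≤ a (w u.succ)).card = cnt a n w 0 := by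
  rw [cnt]
  apply Finset.card_bij (fun (u : Fin n) _ => u.succ)
  · intro u hu
    simp only [Finset.mem_filter, Finset.mem_univ, true_and] at hu ⊢
    rcases lt_or_eq_of_le hu with h | h
    · exact h
    · exact absurd h.symm (hw u.succ 0 (Fin.succ_ne_zero u))
  · intro u _ u' _ h
    exact Fin.succ_injective n h
  · intro v hv
    simp only [Finset.mem_filter, Finset.mem_univ, true_and] at hv
    have hv0 : v ≠ 0 := by
      rintro rfl
      exact lt_irrefl _ hv
    obtain ⟨u, rfl⟩ := Fin.exists_succ_eq.2 hv0
    exact ⟨u, Finset.mem_filter.2 ⟨Finset.mem_univ _, le_of_lt hv⟩, rfl⟩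

/-- **rank uniformity**: probability that at most `s` of the `n` calibration scores
are above the test score -/
lemma rank_le_prob (ha : Measurable a) (hatomless : ∀ r : ℝ, P0 {x | a x = r} = 0)
    {s : ℕ} (hs : s ≤ n) :
    Measure.pi (fun _ : Fin (n+1) => P0)
        {w | (Finset.univ.filter fun u : Fin n => a (w 0) ≤ a (w u.succ)).card ≤ s}
      = ((s : ℝ≥0∞) + 1) * ((n : ℝ≥0∞) + 1)⁻¹ := by
  set π := Measure.pi (fun _ : Fin (n+1) => P0) with hπ
  set E := {w : Fin (n+1) → 𝒳 |
    (Finset.univ.filter fun u : Fin n => a (w 0) ≤ a (w u.succ)).card ≤ s} with hE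
  set U := ⋃ r ∈ Finset.range (s+1), {w : Fin (n+1) → 𝒳 | cnt a n w 0 = r} with hU
  have hNTnull := NT_compl_null P0 a n ha hatomless
  have hEU : ∀ w ∈ NT a n, (w ∈ E ↔ w ∈ U) := by
    intro w hw
    rw [hE, hU]
    simp only [Set.mem_setOf_eq, Set.mem_iUnion, Finset.mem_range, exists_prop]
    rw [count_eq_cnt a n hw]
    constructor
    · intro h; exact ⟨cnt a n w 0, by omega, rfl⟩
    · rintro ⟨r, hr, h⟩; omega
  have hae : E =ᵐ[π] U := by
    rw [MeasureTheory.ae_eq_set]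
    constructor
    · refine measure_mono_null ?_ hNTnull
      intro w hw
      intro hNT
      exact hw.2 ((hEU w hNT).1 hw.1)
    · refine measure_mono_null ?_ hNTnull
      intro w hw
      intro hNT
      exact hw.2 ((hEU w hNT).2 hw.1)
  rw [measure_congr hae, hU]
  rw [measure_biUnion_finset₀]
  · have : ∀ r ∈ Finset.range (s+1), π {w : Fin (n+1) → 𝒳 | cnt a n w 0 = r}
        = ((n : ℝ≥0∞) + 1)⁻¹ := by
      intro r hr
      simp only [Finset.mem_range] at hr
      exact cnt_uniform P0 a n ha hatomless (by omega)
    rw [Finset.sum_congr rfl this, Finset.sum_const, Finset.card_range, nsmul_eq_mul]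
    push_cast
    ring
  · intro r _ r' _ hne
    apply Disjoint.aedisjoint
    rw [Set.disjoint_left]
    intro w hw hw'
    exact hne (hw ▸ hw' ▸ rfl)
  · exact fun r _ =>
      ((measurable_cnt a n ha 0) (measurableSet_singleton r)).nullMeasurableSet


end rank

section prob
set_option linter.unusedSectionVars false


variable {Ω 𝒳 : Type*} [MeasurableSpace Ω] [MeasurableSpace 𝒳]

/-- law of the (n+1)-vector (X i, Z i ·) is the iid product -/
lemma map_cons_law (μ : Measure Ω) [IsProbabilityMeasure μ]
    (P0 : Measure 𝒳) [IsProbabilityMeasure P0]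
    (m n : ℕ)
    (X : Fin m → Ω → 𝒳) (Z : Fin m → Fin n → Ω → 𝒳)
    (hXmeas : ∀ i, Measurable (X i)) (hZmeas : ∀ i j, Measurable (Z i j))
    (hindep : iIndepFun
      (Sum.elim X (fun q : Fin m × Fin n => Z q.1 q.2) : Fin m ⊕ (Fin m × Fin n) → Ω → 𝒳) μ)
    (i : Fin m) (hXlawi : μ.map (X i) = P0) (hZlawi : ∀ u, μ.map (Z i u) = P0) :
    μ.map (fun ω => Fin.cons (X i ω) (fun u => Z i u ω) : Ω → Fin (n+1) → 𝒳)
      = Measure.pi (fun _ : Fin (n+1) => P0) := by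
  set F : Fin m ⊕ (Fin m × Fin n) → Ω → 𝒳 :=
    Sum.elim X (fun q : Fin m × Fin n => Z q.1 q.2) with hF
  set W : Ω → Fin (n+1) → 𝒳 := fun ω => Fin.cons (X i ω) (fun u => Z i u ω) with hW
  have hWmeas : Measurable W := by
    apply measurable_pi_lambda
    intro v
    refine Fin.cases ?_ ?_ v
    · simpa [hW] using hXmeas i
    · intro u; simpa [hW] using hZmeas i u
  refine (Measure.pi_eq (μ := fun _ : Fin (n+1) => P0) fun s hs => ?_).symm
  rw [Measure.map_apply hWmeas (MeasurableSet.univ_pi hs)]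
  set S : Finset (Fin m ⊕ (Fin m × Fin n)) :=
    insert (Sum.inl i) ((Finset.univ : Finset (Fin n)).image fun u => Sum.inr (i, u)) with hS
  set sets : Fin m ⊕ (Fin m × Fin n) → Set 𝒳 := fun c =>
    Sum.rec (fun j => if j = i then s 0 else Set.univ)
      (fun q => if q.1 = i then s (q.2.succ) else Set.univ) c with hsets
  have hsetsm : ∀ c, MeasurableSet (sets c) := by
    rintro (j | q)
    · simp only [hsets]; split_ifs with h
      · exact hs 0
      · exact MeasurableSet.univ
    · simp only [hsets]; split_ifs with h
      · exact hs _
      · exact MeasurableSet.univ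
  have hpre : W ⁻¹' (Set.pi Set.univ s) = ⋂ c ∈ S, F c ⁻¹' sets c := by
    ext ω
    simp only [Set.mem_preimage, Set.mem_pi, Set.mem_univ, true_implies, hS,
      Finset.mem_insert, Finset.mem_image, Set.mem_iInter, Finset.mem_univ]
    constructor
    · intro h c hc
      rcases hc with rfl | ⟨u, -, rfl⟩
      · have := h 0
        simpa [hW, hF, hsets] using this
      · have := h u.succ
        simpa [hW, hF, hsets] using this
    · intro h v
      refine Fin.cases ?_ ?_ v
      · have := h (Sum.inl i) (Or.inl rfl)
        simpa [hW, hF, hsets] using this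
      · intro u
        have := h (Sum.inr (i, u)) (Or.inr ⟨u, trivial, rfl⟩)
        simpa [hW, hF, hsets] using this
  rw [hpre, hindep.measure_inter_preimage_eq_mul S (fun c _ => hsetsm c)]
  have hnotmem : Sum.inl i ∉ (Finset.univ : Finset (Fin n)).image fun u => Sum.inr (i, u) := by
    simp
  have hinj : ∀ u ∈ (Finset.univ : Finset (Fin n)), ∀ u' ∈ (Finset.univ : Finset (Fin n)),
      (Sum.inr (i, u) : Fin m ⊕ (Fin m × Fin n)) = Sum.inr (i, u') → u = u' := by
    intro u _ u' _ h
    simpa using h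
  rw [hS, Finset.prod_insert hnotmem, Finset.prod_image hinj]
  have h1 : μ (F (Sum.inl i) ⁻¹' sets (Sum.inl i)) = P0 (s 0) := by
    have : F (Sum.inl i) = X i := rfl
    rw [this]
    have : sets (Sum.inl i) = s 0 := by simp [hsets]
    rw [this, ← Measure.map_apply (hXmeas i) (hs 0), hXlawi]
  have h2 : ∀ u : Fin n, μ (F (Sum.inr (i, u)) ⁻¹' sets (Sum.inr (i, u))) = P0 (s u.succ) := by
    intro u
    have e1 : F (Sum.inr (i, u)) = Z i u := rfl
    have e2 : sets (Sum.inr (i, u)) = s u.succ := by simp [hsets]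
    rw [e1, e2, ← Measure.map_apply (hZmeas i u) (hs u.succ), hZlawi u]
  rw [h1, Finset.prod_congr rfl (fun u _ => h2 u), Fin.prod_univ_succ]

/-- joint law of all coordinates is the product of the marginals -/
lemma joint_law (μ : Measure Ω) [IsProbabilityMeasure μ]
    (m n : ℕ)
    (X : Fin m → Ω → 𝒳) (Z : Fin m → Fin n → Ω → 𝒳)
    (hXmeas : ∀ i, Measurable (X i)) (hZmeas : ∀ i j, Measurable (Z i j))
    (hindep : iIndepFun
      (Sum.elim X (fun q : Fin m × Fin n => Z q.1 q.2) : Fin m ⊕ (Fin m × Fin n) → Ω → 𝒳) μ) :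
    μ.map (fun ω c => Sum.elim X (fun q : Fin m × Fin n => Z q.1 q.2) c ω)
      = Measure.pi (fun c => μ.map (Sum.elim X (fun q : Fin m × Fin n => Z q.1 q.2) c)) := by
  set F : Fin m ⊕ (Fin m × Fin n) → Ω → 𝒳 :=
    Sum.elim X (fun q : Fin m × Fin n => Z q.1 q.2) with hF
  have hFmeas : ∀ c, Measurable (F c) := by
    rintro (j | q)
    · exact hXmeas j
    · exact hZmeas q.1 q.2
  haveI : ∀ c, IsProbabilityMeasure (μ.map (F c)) :=
    fun c => Measure.isProbabilityMeasure_map (hFmeas c).aemeasurable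
  have hWmeas : Measurable (fun ω c => F c ω) := measurable_pi_lambda _ hFmeas
  refine (Measure.pi_eq (μ := fun c => μ.map (F c)) fun s hs => ?_).symm
  rw [Measure.map_apply hWmeas (MeasurableSet.univ_pi hs)]
  have hpre : (fun ω c => F c ω) ⁻¹' (Set.pi Set.univ s)
      = ⋂ c ∈ (Finset.univ : Finset (Fin m ⊕ (Fin m × Fin n))), F c ⁻¹' s c := by
    ext ω
    simp [Set.mem_pi]
  rw [hpre, hindep.measure_inter_preimage_eq_mul Finset.univ (fun c _ => hs c)]
  exact Finset.prod_congr rfl fun c _ => (Measure.map_apply (hFmeas c) (hs c)).symm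



variable {m n : ℕ} {α : ℝ}

lemma empPval_nonneg (n : ℕ) {𝒳' : Type*} (a : 𝒳' → ℝ) (x : 𝒳') (z : Fin n → 𝒳') :
    0 ≤ empPval n a x z := by
  unfold empPval
  apply mul_nonneg
  · positivity
  · apply Finset.sum_nonneg; intro u _; split_ifs <;> norm_num

/-- measurability of the p-value vector -/
lemma measurable_pvec (μ : Measure Ω) (P0 : Measure 𝒳)
    (a : 𝒳 → ℝ) (ha : Measurable a) (m n : ℕ) :
    Measurable (fun w : (Fin m ⊕ (Fin m × Fin n)) → 𝒳 =>
      fun j : Fin m => empPval n a (w (Sum.inl j)) (fun u => w (Sum.inr (j, u)))) := by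
  apply measurable_pi_lambda
  intro j
  unfold empPval
  apply Measurable.const_mul
  apply Finset.measurable_sum
  intro u _
  refine Measurable.ite ?_ measurable_const measurable_const
  exact measurableSet_le (ha.comp (measurable_pi_apply (Sum.inl j)))
    (ha.comp (measurable_pi_apply (Sum.inr (j, u))))

/-- exchangeability of the null indices -/
lemma exchange_R (μ : Measure Ω) [IsProbabilityMeasure μ]
    (P0 : Measure 𝒳) [IsProbabilityMeasure P0]
    (m n : ℕ) (H0 : Finset (Fin m))
    (a : 𝒳 → ℝ) (ha : Measurable a)
    (X : Fin m → Ω → 𝒳) (Z : Fin m → Fin n → Ω → 𝒳)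
    (hXmeas : ∀ i, Measurable (X i)) (hZmeas : ∀ i j, Measurable (Z i j))
    (hindep : iIndepFun
      (Sum.elim X (fun q : Fin m × Fin n => Z q.1 q.2) : Fin m ⊕ (Fin m × Fin n) → Ω → 𝒳) μ)
    (hXlaw : ∀ i ∈ H0, μ.map (X i) = P0)
    (hZlaw : ∀ i j, μ.map (Z i j) = P0)
    (α : ℝ) {i i' : Fin m} (hi : i ∈ H0) (hi' : i' ∈ H0) (k : ℕ) :
    μ {ω | bhR m α (Function.update
        (fun j => empPval n a (X j ω) (fun u => Z j u ω)) i' 0) = k}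
      = μ {ω | bhR m α (Function.update
        (fun j => empPval n a (X j ω) (fun u => Z j u ω)) i 0) = k} := by
  set F : Fin m ⊕ (Fin m × Fin n) → Ω → 𝒳 :=
    Sum.elim X (fun q : Fin m × Fin n => Z q.1 q.2) with hF
  have hFmeas : ∀ c, Measurable (F c) := by
    rintro (j | q)
    · exact hXmeas j
    · exact hZmeas q.1 q.2
  set ν : (Fin m ⊕ (Fin m × Fin n)) → Measure 𝒳 := fun c => μ.map (F c) with hν
  haveI : ∀ c, IsProbabilityMeasure (ν c) :=
    fun c => Measure.isProbabilityMeasure_map (hFmeas c).aemeasurable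
  have hlaw : μ.map (fun ω c => F c ω) = Measure.pi ν :=
    joint_law μ m n X Z hXmeas hZmeas hindep
  have hWmeas : Measurable (fun ω (c : Fin m ⊕ (Fin m × Fin n)) => F c ω) :=
    measurable_pi_lambda _ hFmeas
  set pw : ((Fin m ⊕ (Fin m × Fin n)) → 𝒳) → Fin m → ℝ := fun w j =>
    empPval n a (w (Sum.inl j)) (fun u => w (Sum.inr (j, u))) with hpw
  have hpwm : Measurable pw := measurable_pvec μ P0 a ha m n
  set B : Fin m → Set ((Fin m ⊕ (Fin m × Fin n)) → 𝒳) := fun ii =>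
    {w | bhR m α (Function.update (pw w) ii 0) = k} with hB
  have hBmeas : ∀ ii, MeasurableSet (B ii) := by
    intro ii
    exact ((measurable_bhR m α).comp ((measurable_update_comp ii).comp hpwm))
      (measurableSet_singleton k)
  have hev : ∀ ii : Fin m, {ω | bhR m α (Function.update
      (fun j => empPval n a (X j ω) (fun u => Z j u ω)) ii 0) = k}
      = (fun ω (c : Fin m ⊕ (Fin m × Fin n)) => F c ω) ⁻¹' (B ii) := by
    intro ii
    rfl
  rw [hev i, hev i', ← Measure.map_apply hWmeas (hBmeas i),
    ← Measure.map_apply hWmeas (hBmeas i'), hlaw]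
  -- now a statement about the product measure
  set σ : Fin m ≃ Fin m := Equiv.swap i i' with hσ
  set e : (Fin m ⊕ (Fin m × Fin n)) ≃ (Fin m ⊕ (Fin m × Fin n)) :=
    Equiv.sumCongr σ (Equiv.prodCongr σ (Equiv.refl (Fin n))) with he
  have hνe : ∀ c, ν (e c) = ν c := by
    have hXswap : ∀ j : Fin m, μ.map (X (σ j)) = μ.map (X j) := by
      intro j
      rcases eq_or_ne j i with rfl | h1
      · rw [hσ, Equiv.swap_apply_left, hXlaw _ hi', hXlaw _ hi]
      rcases eq_or_ne j i' with rfl | h2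
      · rw [hσ, Equiv.swap_apply_right, hXlaw _ hi, hXlaw _ hi']
      · rw [hσ, Equiv.swap_apply_of_ne_of_ne h1 h2]
    rintro (j | ⟨j, u⟩)
    · simpa [hν, he, hF] using hXswap j
    · simp only [hν, he, hF, Equiv.sumCongr_apply, Sum.map_inr, Equiv.prodCongr_apply,
        Equiv.coe_refl, Prod.map_apply, id_eq, Sum.elim_inr]
      rw [hZlaw, hZlaw]
  have hmp := measurePreserving_piCongrLeft (fun c => ν c) e
  have hpieq : (Measure.pi fun c => ν (e c)) = Measure.pi ν := by
    congr 1
    funext c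
    exact hνe c
  rw [hpieq] at hmp
  set g := MeasurableEquiv.piCongrLeft (fun _ : Fin m ⊕ (Fin m × Fin n) => 𝒳) e with hg
  have hgco : ⇑g = fun w c => w (e.symm c) := by
    funext w c
    conv_lhs => rw [show c = e (e.symm c) by simp]
    rw [hg, MeasurableEquiv.piCongrLeft_apply_apply]
  have hkey : g ⁻¹' (B i') = B i := by
    ext w
    simp only [Set.mem_preimage, hB, Set.mem_setOf_eq, hgco]
    have hpwg : pw (fun c => w (e.symm c)) = pw w ∘ σ := by
      funext j
      simp only [hpw, Function.comp_apply, he, Equiv.sumCongr_symm, Equiv.sumCongr_apply,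
        Equiv.prodCongr_symm, Equiv.refl_symm]
      congr 1
    rw [hpwg]
    have hupd : Function.update (pw w ∘ σ) i' 0 = (Function.update (pw w) i 0) ∘ σ := by
      funext j
      rcases eq_or_ne j i' with rfl | hne
      · rw [Function.update_self, Function.comp_apply, Equiv.swap_apply_right,
          Function.update_self]
      · rw [Function.update_of_ne hne]
        simp only [Function.comp_apply]
        rw [Function.update_of_ne]
        intro hc
        apply hne
        have : σ j = σ i' := by rw [hc, hσ, Equiv.swap_apply_right]
        exact σ.injective this
    rw [hupd, bhR_comp σ (Function.update (pw w) i 0)]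
  calc (Measure.pi ν) (B i') = (Measure.pi ν) (g ⁻¹' (B i')) :=
        (hmp.measure_preimage (hBmeas i').nullMeasurableSet).symm
    _ = (Measure.pi ν) (B i) := by rw [hkey]


/-- independence of the p-value `p i'` and the modified rejection count `R(i')` -/
lemma indep_factor (μ : Measure Ω) [IsProbabilityMeasure μ]
    (m n : ℕ)
    (a : 𝒳 → ℝ) (ha : Measurable a)
    (X : Fin m → Ω → 𝒳) (Z : Fin m → Fin n → Ω → 𝒳)
    (hXmeas : ∀ i, Measurable (X i)) (hZmeas : ∀ i j, Measurable (Z i j))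
    (hindep : iIndepFun
      (Sum.elim X (fun q : Fin m × Fin n => Z q.1 q.2) : Fin m ⊕ (Fin m × Fin n) → Ω → 𝒳) μ)
    (α : ℝ) (i' : Fin m) (t : ℝ) (k : ℕ) :
    μ ({ω | empPval n a (X i' ω) (fun u => Z i' u ω) ≤ t}
        ∩ {ω | bhR m α (Function.update
            (fun j => empPval n a (X j ω) (fun u => Z j u ω)) i' 0) = k})
      = μ {ω | empPval n a (X i' ω) (fun u => Z i' u ω) ≤ t}
        * μ {ω | bhR m α (Function.update
            (fun j => empPval n a (X j ω) (fun u => Z j u ω)) i' 0) = k} := by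
  set F : Fin m ⊕ (Fin m × Fin n) → Ω → 𝒳 :=
    Sum.elim X (fun q : Fin m × Fin n => Z q.1 q.2) with hF
  have hFmeas : ∀ c, Measurable (F c) := by
    rintro (j | q)
    · exact hXmeas j
    · exact hZmeas q.1 q.2
  set S : Finset (Fin m ⊕ (Fin m × Fin n)) :=
    insert (Sum.inl i') ((Finset.univ : Finset (Fin n)).image fun u => Sum.inr (i', u)) with hS
  set T : Finset (Fin m ⊕ (Fin m × Fin n)) := Sᶜ with hT
  have hST : Disjoint S T := disjoint_compl_right
  have hIF := hindep.indepFun_finset S T hST hFmeas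
  have hmemS1 : Sum.inl i' ∈ S := Finset.mem_insert_self _ _
  have hmemS2 : ∀ u : Fin n, Sum.inr (i', u) ∈ S := fun u =>
    Finset.mem_insert_of_mem (Finset.mem_image.2 ⟨u, Finset.mem_univ u, rfl⟩)
  have hTl : ∀ j : Fin m, j ≠ i' → Sum.inl j ∈ T := by
    intro j hj
    rw [hT, Finset.mem_compl, hS]
    simp only [Finset.mem_insert, Finset.mem_image, not_or]
    exact ⟨fun h => hj (by injection h), by simp⟩
  have hTr : ∀ (j : Fin m) (u : Fin n), j ≠ i' → Sum.inr (j, u) ∈ T := by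
    intro j u hj
    rw [hT, Finset.mem_compl, hS]
    simp only [Finset.mem_insert, Finset.mem_image, not_or]
    refine ⟨by simp, ?_⟩
    rintro ⟨v, -, hv⟩
    injection hv with hv2
    exact hj (congrArg Prod.fst hv2).symm
  set φ : ((c : {x // x ∈ S}) → 𝒳) → ℝ := fun w =>
    empPval n a (w ⟨Sum.inl i', hmemS1⟩) (fun u => w ⟨Sum.inr (i', u), hmemS2 u⟩) with hφ
  have hφm : Measurable φ := by
    rw [hφ]; unfold empPval
    apply Measurable.const_mul
    apply Finset.measurable_sum
    intro u _
    refine Measurable.ite ?_ measurable_const measurable_const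
    exact measurableSet_le (ha.comp (measurable_pi_apply _)) (ha.comp (measurable_pi_apply _))
  set ψ : ((c : {x // x ∈ T}) → 𝒳) → Fin m → ℝ := fun w j =>
    if h : j = i' then 0
    else empPval n a (w ⟨Sum.inl j, hTl j h⟩) (fun u => w ⟨Sum.inr (j, u), hTr j u h⟩) with hψ
  have hψm : Measurable ψ := by
    apply measurable_pi_lambda
    intro j
    rcases eq_or_ne j i' with rfl | hj
    · simp only [hψ, dif_pos rfl]; exact measurable_const
    · simp only [hψ, dif_neg hj]
      unfold empPval
      apply Measurable.const_mul
      apply Finset.measurable_sum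
      intro u _
      refine Measurable.ite ?_ measurable_const measurable_const
      exact measurableSet_le (ha.comp (measurable_pi_apply _)) (ha.comp (measurable_pi_apply _))
  set ψR : ((c : {x // x ∈ T}) → 𝒳) → ℕ := fun w => bhR m α (Function.update (ψ w) i' 0)
    with hψR
  have hψRm : Measurable ψR :=
    (measurable_bhR m α).comp ((measurable_update_comp i').comp hψm)
  have hcomp := hIF.comp hφm hψRm
  have he1 : (φ ∘ fun ω (c : {x // x ∈ S}) => F c.1 ω)
      = fun ω => empPval n a (X i' ω) (fun u => Z i' u ω) := rfl
  have he2 : (ψR ∘ fun ω (c : {x // x ∈ T}) => F c.1 ω)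
      = fun ω => bhR m α (Function.update
          (fun j => empPval n a (X j ω) (fun u => Z j u ω)) i' 0) := by
    funext ω
    simp only [Function.comp_apply, hψR]
    congr 1
    funext j
    rcases eq_or_ne j i' with rfl | hj
    · rw [Function.update_self, Function.update_self]
    · rw [Function.update_of_ne hj, Function.update_of_ne hj, hψ]
      simp only [dif_neg hj]
      rfl
  rw [he1, he2] at hcomp
  have := hcomp.measure_inter_preimage_eq_mul (s := Set.Iic t) (t := {k})
    measurableSet_Iic (measurableSet_singleton k)
  exact this

/-- the distribution of the empirical count for a null index -/
lemma count_prob (μ : Measure Ω) [IsProbabilityMeasure μ]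
    (P0 : Measure 𝒳) [IsProbabilityMeasure P0]
    (m n : ℕ)
    (a : 𝒳 → ℝ) (ha : Measurable a)
    (X : Fin m → Ω → 𝒳) (Z : Fin m → Fin n → Ω → 𝒳)
    (hXmeas : ∀ i, Measurable (X i)) (hZmeas : ∀ i j, Measurable (Z i j))
    (hindep : iIndepFun
      (Sum.elim X (fun q : Fin m × Fin n => Z q.1 q.2) : Fin m ⊕ (Fin m × Fin n) → Ω → 𝒳) μ)
    (hatomless : ∀ r : ℝ, P0 {x | a x = r} = 0)
    (i : Fin m) (hXlawi : μ.map (X i) = P0) (hZlawi : ∀ u, μ.map (Z i u) = P0)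
    {s : ℕ} (hs : s ≤ n) :
    μ {ω | (Finset.univ.filter fun u : Fin n => a (X i ω) ≤ a (Z i u ω)).card ≤ s}
      = ((s : ℝ≥0∞) + 1) * ((n : ℝ≥0∞) + 1)⁻¹ := by
  set W : Ω → Fin (n+1) → 𝒳 := fun ω => Fin.cons (X i ω) (fun u => Z i u ω) with hW
  have hWmeas : Measurable W := by
    apply measurable_pi_lambda
    intro v
    refine Fin.cases ?_ ?_ v
    · simpa [hW] using hXmeas i
    · intro u; simpa [hW] using hZmeas i u
  have hmap : μ.map W = Measure.pi (fun _ : Fin (n+1) => P0) :=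
    map_cons_law μ P0 m n X Z hXmeas hZmeas hindep i hXlawi hZlawi
  set E : Set (Fin (n+1) → 𝒳) :=
    {w | (Finset.univ.filter fun u : Fin n => a (w 0) ≤ a (w u.succ)).card ≤ s} with hE
  have hEmeas : MeasurableSet E := by
    have hc : Measurable fun w : Fin (n+1) → 𝒳 =>
        (Finset.univ.filter fun u : Fin n => a (w 0) ≤ a (w u.succ)).card := by
      have : (fun w : Fin (n+1) → 𝒳 =>
          (Finset.univ.filter fun u : Fin n => a (w 0) ≤ a (w u.succ)).card)
          = fun w => ∑ u : Fin n, if a (w 0) ≤ a (w u.succ) then 1 else 0 := by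
        funext w; rw [Finset.card_filter]
      rw [this]
      apply Finset.measurable_sum
      intro u _
      refine Measurable.ite ?_ measurable_const measurable_const
      exact measurableSet_le (ha.comp (measurable_pi_apply _)) (ha.comp (measurable_pi_apply _))
    exact hc measurableSet_Iic
  have hev : {ω | (Finset.univ.filter fun u : Fin n => a (X i ω) ≤ a (Z i u ω)).card ≤ s}
      = W ⁻¹' E := by
    ext ω
    simp only [Set.mem_setOf_eq, Set.mem_preimage, hE, hW, Fin.cons_zero, Fin.cons_succ]
  rw [hev, ← Measure.map_apply hWmeas hEmeas, hmap]
  exact rank_le_prob P0 a n ha hatomless hs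

/-- arithmetic: the p-value event as a count event -/
lemma empPval_le_iff {𝒳' : Type*} (n : ℕ) (hn : 0 < n) (a : 𝒳' → ℝ) (x : 𝒳')
    (z : Fin n → 𝒳') {t : ℝ} (ht : 0 ≤ t) :
    empPval n a x z ≤ t
      ↔ (Finset.univ.filter fun u : Fin n => a x ≤ a (z u)).card ≤ (⌊t * n⌋).toNat := by
  have hcard : empPval n a x z
      = ((Finset.univ.filter fun u : Fin n => a x ≤ a (z u)).card : ℝ) / n := by
    rw [empPval, Finset.card_filter]
    push_cast
    ring
  rw [hcard]
  have hn' : (0 : ℝ) < n := by exact_mod_cast hn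
  rw [div_le_iff₀ hn']
  constructor
  · intro h
    have h1 : ((Finset.univ.filter fun u : Fin n => a x ≤ a (z u)).card : ℤ) ≤ ⌊t * n⌋ :=
      Int.le_floor.2 (by exact_mod_cast h)
    omega
  · intro h
    have h0 : (0 : ℤ) ≤ ⌊t * n⌋ := Int.floor_nonneg.2 (by positivity)
    have h1 : ((Finset.univ.filter fun u : Fin n => a x ≤ a (z u)).card : ℤ) ≤ ⌊t * n⌋ := by
      omega
    calc ((Finset.univ.filter fun u : Fin n => a x ≤ a (z u)).card : ℝ)
        ≤ (⌊t * n⌋ : ℝ) := by exact_mod_cast h1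
      _ ≤ t * n := Int.floor_le _

end prob
end BHaux

/-- FDR of BH applied to independent empirical p-values, each computed
from its own calibration set of `n` i.i.d. `P0` points; the FDR equals
`m0 * ∑ₖ (⌊α k n / m⌋ + 1)/((n+1) k) * P(R(i) = k)` for any null index `i`, where `R(i)` is
the number of BH rejections when `p̂ᵢ` is replaced by `0`. -/
theorem fdr_bh_empirical_pvalues
    {Ω 𝒳 : Type*} [MeasurableSpace Ω] [MeasurableSpace 𝒳]
    (μ : Measure Ω) [IsProbabilityMeasure μ]
    (P0 : Measure 𝒳) [IsProbabilityMeasure P0]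
    (m n m0 : ℕ) (hm : 0 < m) (hn : 0 < n)
    (H0 : Finset (Fin m)) (hcard : H0.card = m0)
    (a : 𝒳 → ℝ) (ha : Measurable a)
    (X : Fin m → Ω → 𝒳) (Z : Fin m → Fin n → Ω → 𝒳)
    (hXmeas : ∀ i, Measurable (X i)) (hZmeas : ∀ i j, Measurable (Z i j))
    (hindep : iIndepFun
      (Sum.elim X (fun q : Fin m × Fin n => Z q.1 q.2) : Fin m ⊕ (Fin m × Fin n) → Ω → 𝒳) μ)
    (hXlaw : ∀ i ∈ H0, μ.map (X i) = P0)
    (hZlaw : ∀ i j, μ.map (Z i j) = P0)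
    (hatomless : ∀ r : ℝ, P0 {x | a x = r} = 0)
    (α : ℝ) (hα : α ∈ Set.Ioc (0 : ℝ) 1) :
    ∀ i ∈ H0,
      ∫ ω, bhFDP m α H0 (fun j => empPval n a (X j ω) (fun u => Z j u ω)) ∂μ
        = m0 * ∑ k ∈ Finset.Icc 1 m,
            (((⌊α * k * n / m⌋ : ℝ) + 1) / ((n + 1) * k))
              * (μ {ω | bhR m α
                  (Function.update (fun j => empPval n a (X j ω) (fun u => Z j u ω)) i 0)
                    = k}).toReal := by
  classical
  intro i hi
  obtain ⟨hα0, hα1⟩ := hα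
  -- measurability of the p-values as functions of ω
  have hpv : ∀ i' : Fin m, Measurable (fun ω => empPval n a (X i' ω) (fun u => Z i' u ω)) := by
    intro i'
    unfold empPval
    apply Measurable.const_mul
    apply Finset.measurable_sum
    intro u _
    refine Measurable.ite ?_ measurable_const measurable_const
    exact measurableSet_le (ha.comp (hXmeas i')) (ha.comp (hZmeas i' u))
  have hpvec : Measurable (fun ω => (fun j => empPval n a (X j ω) (fun u => Z j u ω))) :=
    measurable_pi_lambda _ hpv
  -- the two families of events
  set A1 : Fin m → ℕ → Set Ω := fun i' k =>
    {ω | empPval n a (X i' ω) (fun u => Z i' u ω) ≤ α * k / m} with hA1def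
  set A2 : Fin m → ℕ → Set Ω := fun i' k =>
    {ω | bhR m α (Function.update
      (fun j => empPval n a (X j ω) (fun u => Z j u ω)) i' 0) = k} with hA2def
  have hA1 : ∀ i' k, MeasurableSet (A1 i' k) := fun i' k => (hpv i') measurableSet_Iic
  have hA2 : ∀ i' k, MeasurableSet (A2 i' k) := by
    intro i' k
    exact ((BHaux.measurable_bhR m α).comp
      ((BHaux.measurable_update_comp i').comp hpvec)) (measurableSet_singleton k)
  -- pointwise FDP decomposition
  have hint : (fun ω => bhFDP m α H0 (fun j => empPval n a (X j ω) (fun u => Z j u ω)))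
      = fun ω => ∑ i' ∈ H0, ∑ k ∈ Finset.Icc 1 m,
          (A1 i' k ∩ A2 i' k).indicator (fun _ => (k : ℝ)⁻¹) ω := by
    funext ω
    rw [BHaux.fdp_pointwise hm hα0 (fun j => BHaux.empPval_nonneg n a _ _) H0]
    apply Finset.sum_congr rfl; intro i' _
    apply Finset.sum_congr rfl; intro k _
    rw [Set.indicator_apply]
    by_cases h : ω ∈ A1 i' k ∩ A2 i' k
    · rw [if_pos h, if_pos]
      exact ⟨h.1, h.2⟩
    · rw [if_neg h, if_neg]
      intro hc
      exact h ⟨hc.1, hc.2⟩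
  rw [hint]
  -- exchange integral and sums
  have hinteg : ∀ (i' : Fin m) (k : ℕ),
      Integrable ((A1 i' k ∩ A2 i' k).indicator (fun _ => (k : ℝ)⁻¹)) μ :=
    fun i' k => (integrable_const _).indicator ((hA1 i' k).inter (hA2 i' k))
  rw [integral_finset_sum H0 (fun i' _ =>
    integrable_finset_sum _ (fun k _ => hinteg i' k))]
  have hterm : ∀ i' ∈ H0, ∫ ω, ∑ k ∈ Finset.Icc 1 m,
      (A1 i' k ∩ A2 i' k).indicator (fun _ => (k : ℝ)⁻¹) ω ∂μ
      = ∑ k ∈ Finset.Icc 1 m,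
          (((⌊α * k * n / m⌋ : ℝ) + 1) / ((n + 1) * k)) * (μ (A2 i k)).toReal := by
    intro i' hi'
    rw [integral_finset_sum _ (fun k _ => hinteg i' k)]
    apply Finset.sum_congr rfl
    intro k hk
    rw [Finset.mem_Icc] at hk
    rw [integral_indicator_const _ ((hA1 i' k).inter (hA2 i' k))]
    -- independence
    have hprod : μ (A1 i' k ∩ A2 i' k) = μ (A1 i' k) * μ (A2 i' k) :=
      BHaux.indep_factor μ m n a ha X Z hXmeas hZmeas hindep α i' (α * k / m) k
    -- p-value marginal
    have ht0 : (0 : ℝ) ≤ α * k / m := by positivity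
    set sk : ℕ := (⌊α * k * n / m⌋).toNat with hsk
    have hfl0 : (0 : ℤ) ≤ ⌊α * k * n / m⌋ := Int.floor_nonneg.2 (by positivity)
    have hskn : sk ≤ n := by
      have hle : α * k * n / m ≤ (n : ℝ) := by
        rw [div_le_iff₀ (by exact_mod_cast hm : (0:ℝ) < m)]
        have h1 : α * k ≤ (m : ℝ) := by
          calc α * k ≤ 1 * (m : ℝ) := by
                apply mul_le_mul hα1 (by exact_mod_cast hk.2) (by positivity) zero_le_one
            _ = m := one_mul _
        calc α * (k : ℝ) * n = (α * k) * n := by ring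
          _ ≤ (m : ℝ) * n := by
              apply mul_le_mul_of_nonneg_right h1 (by positivity)
          _ = (n : ℝ) * m := by ring
      have := Int.floor_le_floor hle
      rw [Int.floor_natCast] at this
      omega
    have hA1eq : A1 i' k = {ω |
        (Finset.univ.filter fun u : Fin n => a (X i' ω) ≤ a (Z i' u ω)).card ≤ sk} := by
      ext ω
      simp only [hA1def, Set.mem_setOf_eq]
      rw [BHaux.empPval_le_iff n hn a _ _ ht0]
      have : α * (k : ℝ) / m * n = α * k * n / m := by ring
      rw [this]
    have hμ1 : μ (A1 i' k) = ((sk : ℝ≥0∞) + 1) * ((n : ℝ≥0∞) + 1)⁻¹ := by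
      rw [hA1eq]
      exact BHaux.count_prob μ P0 m n a ha X Z hXmeas hZmeas hindep hatomless i'
        (hXlaw i' hi') (fun u => hZlaw i' u) hskn
    -- exchangeability
    have hμ2 : μ (A2 i' k) = μ (A2 i k) := by
      simp only [hA2def]
      exact BHaux.exchange_R μ P0 m n H0 a ha X Z hXmeas hZmeas hindep hXlaw hZlaw α hi hi' k
    rw [measureReal_def, hprod, hμ1, hμ2]
    -- arithmetic
    have htr : (((sk : ℝ≥0∞) + 1) * ((n : ℝ≥0∞) + 1)⁻¹).toReal
        = ((sk : ℝ) + 1) / ((n : ℝ) + 1) := by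
      rw [ENNReal.toReal_mul, ENNReal.toReal_inv]
      have e1 : ((sk : ℝ≥0∞) + 1).toReal = (sk : ℝ) + 1 := by
        rw [ENNReal.toReal_add (ENNReal.natCast_ne_top sk) ENNReal.one_ne_top]
        simp
      have e2 : ((n : ℝ≥0∞) + 1).toReal = (n : ℝ) + 1 := by
        rw [ENNReal.toReal_add (ENNReal.natCast_ne_top n) ENNReal.one_ne_top]
        simp
      rw [e1, e2, div_eq_mul_inv]
    rw [ENNReal.toReal_mul, htr]
    have hskr : (sk : ℝ) = ((⌊α * k * n / m⌋ : ℤ) : ℝ) := by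
      rw [hsk]
      exact_mod_cast congrArg (Int.cast : ℤ → ℝ) (Int.toNat_of_nonneg hfl0)
    rw [smul_eq_mul, hskr]
    have hk0 : (0 : ℝ) < k := by exact_mod_cast hk.1
    have hn1 : (0 : ℝ) < (n : ℝ) + 1 := by positivity
    field_simp
  rw [Finset.sum_congr rfl hterm, Finset.sum_const, hcard, nsmul_eq_mul]
end

section
/- Let α ∈ (0,1] and let ℓ, m, k be positive integers with k ≤ m, and set n = ⌈ℓm/α⌉ − 1. Then ⌊αkn/m⌋ = kℓ − 1, and the fractional part of αkn/m satisfies 1 − αk/m ≤ frac(αkn/m) < 1 when αk/m < 1 (and frac(αkn/m) ≥ 0 = 1 − αk/m when αk/m = 1). -/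
/-- for `α ∈ (0,1]`, positive integers `ℓ, m, k` with `k ≤ m`, and
`n = ⌈ℓ m / α⌉ - 1`, one has `⌊α k n / m⌋ = k ℓ - 1`, and the fractional part of
`α k n / m` satisfies `1 - α k / m ≤ frac(α k n / m) < 1` when `α k / m < 1`
(and `frac(α k n / m) ≥ 0 = 1 - α k / m` when `α k / m = 1`). -/
theorem frac_part_calibration_general
    (α : ℝ) (hα : α ∈ Set.Ioc (0 : ℝ) 1)
    (ℓ m k : ℕ) (hℓ : 0 < ℓ) (hm : 0 < m) (hk : 0 < k) (hkm : k ≤ m)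
    (n : ℝ) (hn : n = (⌈(ℓ : ℝ) * m / α⌉ : ℝ) - 1) :
    ⌊α * k * n / m⌋ = (k : ℤ) * ℓ - 1
    ∧ (α * k / m < 1 →
        1 - α * k / m ≤ Int.fract (α * k * n / m) ∧ Int.fract (α * k * n / m) < 1)
    ∧ (α * k / m = 1 → 1 - α * k / m ≤ Int.fract (α * k * n / m)) := by
  obtain ⟨hα0, hα1⟩ := hα
  have hmR : (0:ℝ) < m := by exact_mod_cast hm
  have hkR : (0:ℝ) < k := by exact_mod_cast hk
  have hkmR : (k:ℝ) ≤ m := by exact_mod_cast hkm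
  set c : ℤ := ⌈(ℓ : ℝ) * m / α⌉ with hc
  have hle : (ℓ:ℝ) * m / α ≤ c := Int.le_ceil _
  have hlt : (c:ℝ) < (ℓ:ℝ) * m / α + 1 := Int.ceil_lt_add_one _
  have h1 : α * ((c:ℝ) - 1) < ℓ * m := by
    have h : (c:ℝ) - 1 < (ℓ:ℝ) * m / α := by linarith
    have := mul_lt_mul_of_pos_left h hα0
    rwa [mul_div_cancel₀ _ hα0.ne'] at this
  have h2 : (ℓ:ℝ) * m ≤ α * c := by
    have := mul_le_mul_of_nonneg_left hle hα0.le
    rwa [mul_div_cancel₀ _ hα0.ne'] at this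
  subst hn
  have hak : α * k ≤ m := by nlinarith
  have hvlt : α * k * ((c:ℝ) - 1) / m < k * ℓ := by
    rw [div_lt_iff₀ hmR]; nlinarith
  have hvge : (k:ℝ) * ℓ - (α * k / m) ≤ α * k * ((c:ℝ) - 1) / m := by
    have key : α * k / m * m = α * k := div_mul_cancel₀ _ hmR.ne'
    rw [le_div_iff₀ hmR]
    nlinarith [key]
  have hvge' : (k:ℝ) * ℓ - 1 ≤ α * k * ((c:ℝ) - 1) / m := by
    have : α * k / m ≤ 1 := by rw [div_le_one hmR]; exact hak
    linarith
  have hfloor : ⌊α * k * ((c:ℝ) - 1) / m⌋ = (k : ℤ) * ℓ - 1 := by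
    rw [Int.floor_eq_iff]
    constructor
    · push_cast; linarith
    · push_cast; linarith
  refine ⟨hfloor, ?_, ?_⟩
  · intro _
    refine ⟨?_, Int.fract_lt_one _⟩
    rw [Int.fract, hfloor]; push_cast; linarith
  · intro _
    rw [Int.fract, hfloor]; push_cast; linarith
end
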